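/- Let κ, m ∈ ℝ and let f : ℝ → ℝ be continuous. Let φ : ℝ → ℝ → ℝ be C² on ℝ² and satisfy φ_t(t,z) + κ·φ_zz(t,z) + f(z)·φ_z(t,z) = 0 for all (t,z) ∈ ℝ². Suppose u : ℝ → ℝ → ℝ is C² on ℝ × (0,∞), u_r(t,r) ≠ 0 for all t ∈ ℝ and r > 0, and u satisfies u_t(t,r) = κ·(u_rr(t,r) − (m/r)·u_r(t,r))/u_r(t,r)² + f(u(t,r)) for all t ∈ ℝ and r > 0. Define T(t,r) = r^m·φ(t, u(t,r)) and X(t,r) = κ·r^m·φ_z(t, u(t,r))/u_r(t,r). Then ∂T/∂t(t,r) + ∂X/∂r(t,r) = 0 for all t ∈ ℝ and r > 0. -/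

import Mathlib

noncomputable section

/-- Partial derivative in the first (time) variable. -/
def partial_t (u : ℝ → ℝ → ℝ) (t r : ℝ) : ℝ := deriv (fun s => u s r) t

/-- Partial derivative in the second (space) variable. -/
def partial_r (u : ℝ → ℝ → ℝ) (t r : ℝ) : ℝ := deriv (fun s => u t s) r

/-- Second partial derivative in the second (space) variable. -/
def partial_rr (u : ℝ → ℝ → ℝ) (t r : ℝ) : ℝ := deriv (deriv (fun s => u t s)) r

/-- Mixed partial derivative: first in space, then in time. -/
def partial_tr (u : ℝ → ℝ → ℝ) (t r : ℝ) : ℝ := deriv (fun s => deriv (fun y => u s y) r) t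

/-- `u` is C² on ℝ × (0,∞): `u`, `u_t`, `u_r`, `u_rr` and the mixed partial `u_tr`
exist and are continuous there. -/
def IsC2On (u : ℝ → ℝ → ℝ) : Prop :=
  (∀ t r : ℝ, 0 < r → DifferentiableAt ℝ (fun s => u s r) t) ∧
  (∀ t r : ℝ, 0 < r → DifferentiableAt ℝ (fun s => u t s) r) ∧
  (∀ t r : ℝ, 0 < r → DifferentiableAt ℝ (deriv (fun s => u t s)) r) ∧
  (∀ t r : ℝ, 0 < r → DifferentiableAt ℝ (fun s => deriv (fun y => u s y) r) t) ∧
  ContinuousOn (fun q : ℝ × ℝ => u q.1 q.2) {q : ℝ × ℝ | 0 < q.2} ∧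
  ContinuousOn (fun q : ℝ × ℝ => partial_t u q.1 q.2) {q : ℝ × ℝ | 0 < q.2} ∧
  ContinuousOn (fun q : ℝ × ℝ => partial_r u q.1 q.2) {q : ℝ × ℝ | 0 < q.2} ∧
  ContinuousOn (fun q : ℝ × ℝ => partial_rr u q.1 q.2) {q : ℝ × ℝ | 0 < q.2} ∧
  ContinuousOn (fun q : ℝ × ℝ => partial_tr u q.1 q.2) {q : ℝ × ℝ | 0 < q.2}

/-- Infinite family of conservation laws for the 1-dimensional nonlinear
diffusion-reaction equation with diffusivity `h(v) = -κ/v`. -/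
theorem conservation_law_phi_family (κ m : ℝ) (f : ℝ → ℝ) (hf : Continuous f)
    (φ : ℝ → ℝ → ℝ) (hφ : ContDiff ℝ 2 (Function.uncurry φ))
    (hlin : ∀ t z : ℝ, partial_t φ t z + κ * partial_rr φ t z + f z * partial_r φ t z = 0)
    (u : ℝ → ℝ → ℝ) (hu : IsC2On u)
    (hur : ∀ t r : ℝ, 0 < r → partial_r u t r ≠ 0)
    (hpde : ∀ t r : ℝ, 0 < r →
      partial_t u t r
        = κ * (partial_rr u t r - (m / r) * partial_r u t r) / (partial_r u t r) ^ 2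
          + f (u t r))
    (T X : ℝ → ℝ → ℝ)
    (hT : ∀ t r : ℝ, T t r = r ^ m * φ t (u t r))
    (hX : ∀ t r : ℝ, X t r = κ * r ^ m * partial_r φ t (u t r) / partial_r u t r) :
    ∀ t r : ℝ, 0 < r → partial_t T t r + partial_r X t r = 0 := by
  obtain ⟨hu_t, hu_r, hu_rr, hu_tr, -⟩ := hu
  intro t r hr
  have hrne : r ≠ 0 := ne_of_gt hr
  have hFd : Differentiable ℝ (Function.uncurry φ) := hφ.differentiable (by norm_num)
  -- G p = φ_z at p
  have hGc : ContDiff ℝ 1 (fun p : ℝ × ℝ => fderiv ℝ (Function.uncurry φ) p ((0:ℝ),(1:ℝ))) :=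
    (ContinuousLinearMap.apply ℝ ℝ ((0:ℝ),(1:ℝ))).contDiff.comp
      (hφ.fderiv_right (by norm_num))
  have hGd : Differentiable ℝ (fun p : ℝ × ℝ => fderiv ℝ (Function.uncurry φ) p ((0:ℝ),(1:ℝ))) :=
    hGc.differentiable (by norm_num)
  -- partial_t φ in terms of fderiv
  have hpt : ∀ a z : ℝ, partial_t φ a z = fderiv ℝ (Function.uncurry φ) (a, z) ((1:ℝ),(0:ℝ)) := by
    intro a z
    have h1 : HasDerivAt (fun s => φ s z)
        (fderiv ℝ (Function.uncurry φ) (a, z) ((1:ℝ),(0:ℝ))) a :=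
      (hFd (a, z)).hasFDerivAt.comp_hasDerivAt (l := Function.uncurry φ) a (HasDerivAt.prodMk (hasDerivAt_id a) (hasDerivAt_const a z))
    exact h1.deriv
  have hpz : ∀ a z : ℝ, partial_r φ a z = fderiv ℝ (Function.uncurry φ) (a, z) ((0:ℝ),(1:ℝ)) := by
    intro a z
    have h1 : HasDerivAt (fun y => φ a y)
        (fderiv ℝ (Function.uncurry φ) (a, z) ((0:ℝ),(1:ℝ))) z :=
      (hFd (a, z)).hasFDerivAt.comp_hasDerivAt z (HasDerivAt.prodMk (hasDerivAt_const z a) (hasDerivAt_id z))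
    exact h1.deriv
  have hpzz : ∀ a z : ℝ, partial_rr φ a z
      = fderiv ℝ (fun p : ℝ × ℝ => fderiv ℝ (Function.uncurry φ) p ((0:ℝ),(1:ℝ))) (a, z)
          ((0:ℝ),(1:ℝ)) := by
    intro a z
    have e : deriv (fun y => φ a y)
        = fun y => fderiv ℝ (Function.uncurry φ) (a, y) ((0:ℝ),(1:ℝ)) :=
      funext fun y => hpz a y
    have h1 : HasDerivAt (fun y => fderiv ℝ (Function.uncurry φ) (a, y) ((0:ℝ),(1:ℝ)))
        (fderiv ℝ (fun p : ℝ × ℝ => fderiv ℝ (Function.uncurry φ) p ((0:ℝ),(1:ℝ))) (a, z)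
          ((0:ℝ),(1:ℝ))) z :=
      (hGd (a, z)).hasFDerivAt.comp_hasDerivAt z (HasDerivAt.prodMk (hasDerivAt_const z a) (hasDerivAt_id z))
    show deriv (deriv (fun y => φ a y)) z = _
    rw [e]
    exact h1.deriv
  -- abbreviations
  set uv := u t r with huv
  set ut := partial_t u t r with hut
  set ur' := partial_r u t r with hur'
  set urr := partial_rr u t r with hurr
  set A := fderiv ℝ (Function.uncurry φ) (t, uv) ((1:ℝ),(0:ℝ)) with hA
  set B := fderiv ℝ (Function.uncurry φ) (t, uv) ((0:ℝ),(1:ℝ)) with hB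
  set C := fderiv ℝ (fun p : ℝ × ℝ => fderiv ℝ (Function.uncurry φ) p ((0:ℝ),(1:ℝ))) (t, uv)
      ((0:ℝ),(1:ℝ)) with hC
  have hUt : HasDerivAt (fun s => u s r) ut t := (hu_t t r hr).hasDerivAt
  have hUr : HasDerivAt (fun s => u t s) ur' r := (hu_r t r hr).hasDerivAt
  have hUrr : HasDerivAt (fun s => partial_r u t s) urr r := (hu_rr t r hr).hasDerivAt
  have hurne : ur' ≠ 0 := hur t r hr
  -- derivative of T in t
  have hTt : partial_t T t r = r ^ m * (A + ut * B) := by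
    have hc : HasDerivAt (fun s : ℝ => (s, u s r)) ((1:ℝ), ut) t := HasDerivAt.prodMk (hasDerivAt_id t) hUt
    have h1 : HasDerivAt (fun s => φ s (u s r))
        (fderiv ℝ (Function.uncurry φ) (t, uv) ((1:ℝ), ut)) t :=
      (hFd (t, uv)).hasFDerivAt.comp_hasDerivAt (l := Function.uncurry φ) t hc
    have h2 : fderiv ℝ (Function.uncurry φ) (t, uv) ((1:ℝ), ut) = A + ut * B := by
      have e : ((1:ℝ), ut) = ((1:ℝ),(0:ℝ)) + ut • ((0:ℝ),(1:ℝ)) := by simp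
      rw [e, map_add, map_smul, smul_eq_mul, hA, hB]
    rw [h2] at h1
    have h3 := h1.const_mul (r ^ m)
    have hfun : (fun s => T s r) = fun s => r ^ m * φ s (u s r) := funext fun s => hT s r
    show deriv (fun s => T s r) t = _
    rw [hfun]
    rw [h3.deriv]
  -- derivative of X in r
  have hXr : partial_r X t r
      = ((κ * (m * r ^ (m - 1)) * B + κ * r ^ m * (ur' * C)) * ur'
          - κ * r ^ m * B * urr) / ur' ^ 2 := by
    have hrm : HasDerivAt (fun s : ℝ => s ^ m) (m * r ^ (m - 1)) r :=
      Real.hasDerivAt_rpow_const (Or.inl hrne)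
    have hGu : HasDerivAt
        (fun s => fderiv ℝ (Function.uncurry φ) (t, u t s) ((0:ℝ),(1:ℝ))) (ur' * C) r := by
      have hc : HasDerivAt (fun s : ℝ => (t, u t s)) ((0:ℝ), ur') r :=
        HasDerivAt.prodMk (hasDerivAt_const r t) hUr
      have h1 := (hGd (t, uv)).hasFDerivAt.comp_hasDerivAt r hc
      have e : ((0:ℝ), ur') = ur' • ((0:ℝ),(1:ℝ)) := by simp
      rw [e, map_smul, smul_eq_mul] at h1
      exact h1
    have hN : HasDerivAt
        (fun s => κ * s ^ m * fderiv ℝ (Function.uncurry φ) (t, u t s) ((0:ℝ),(1:ℝ)))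
        (κ * (m * r ^ (m - 1)) * B + κ * r ^ m * (ur' * C)) r :=
      (hrm.const_mul κ).mul hGu
    have hQ := hN.div hUrr hurne
    have hfun : (fun s => X t s)
        = fun s => κ * s ^ m * fderiv ℝ (Function.uncurry φ) (t, u t s) ((0:ℝ),(1:ℝ))
            / partial_r u t s := by
      funext s
      rw [hX, hpz]
    show deriv (fun s => X t s) r = _
    rw [hfun]
    exact hQ.deriv
  -- relations
  have hlin' : A + κ * C + f uv * B = 0 := by
    have := hlin t uv
    rwa [hpt, hpz, hpzz, ← hA, ← hB, ← hC] at this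
  have hpde' : ut = κ * (urr - (m / r) * ur') / ur' ^ 2 + f uv := hpde t r hr
  have hr1 : r ^ (m - 1) = r ^ m / r := by
    rw [Real.rpow_sub hr, Real.rpow_one]
  rw [hTt, hXr, hpde', hr1]
  have hA' : A = -(κ * C + f uv * B) := by linarith
  rw [hA']
  field_simp
  ring
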